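/- Let k ≥ 1 be an integer and let {X_i}_{i≥1} be i.i.d. positive-integer-valued random variables. For each n ≥ 1 let C^{=k,w}_n be the event that the weight sequence generated by the gaps {X_i}_{i≥n} (i.e., the sequence of partial sums X_n, X_n + X_{n+1}, X_n + X_{n+1} + X_{n+2}, ...) is weakly asymptotically k-complete, and let C^{≤k,w}_n be the event that this weight sequence is weakly asymptotically ≤k-complete. Then for all positive integers n and m, P(C^{=k,w}_m) = P(C^{≤k,w}_n). -/

import Mathlib

open MeasureTheory ProbabilityTheory

lemma prodA {Ω : Type*} [MeasurableSpace Ω] (μ : Measure Ω)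
    (X : ℕ → Ω → ℕ)
    (hindep : iIndepFun X μ)
    (hident : ∀ i, IdentDistrib (X i) (X 1) μ μ)
    (a : ℕ) (I : Finset ℕ) (v : ℕ → ℕ) :
    μ (⋂ j ∈ I, X (a + j) ⁻¹' {v j}) = ∏ j ∈ I, μ (X 1 ⁻¹' {v j}) := by
  have hinj : Function.Injective (fun j : ℕ => a + j) := fun x y h => by
    simpa using h
  have h1 : (⋂ j ∈ I, X (a + j) ⁻¹' {v j})
      = ⋂ r ∈ I.image (fun j => a + j), X r ⁻¹' {v (r - a)} := by
    ext ω
    simp only [Set.mem_iInter, Finset.mem_image]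
    constructor
    · rintro h r ⟨j, hj, rfl⟩
      simpa using h j hj
    · intro h j hj
      simpa using h (a + j) ⟨j, hj, rfl⟩
  rw [h1, hindep.measure_inter_preimage_eq_mul _
    (fun i _ => measurableSet_singleton _),
    Finset.prod_image (fun x _ y _ h => hinj h)]
  refine Finset.prod_congr rfl fun j hj => ?_
  simp only [Nat.add_sub_cancel_left]
  exact (hident (a + j)).measure_mem_eq (measurableSet_singleton _)

lemma map_shift_eq {Ω : Type*} [MeasurableSpace Ω] (μ : Measure Ω) [IsProbabilityMeasure μ]
    (X : ℕ → Ω → ℕ) (hmeas : ∀ i, Measurable (X i))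
    (hindep : iIndepFun X μ)
    (hident : ∀ i, IdentDistrib (X i) (X 1) μ μ)
    (a b : ℕ) :
    Measure.map (fun ω (i : ℕ) => X (a + i) ω) μ
      = Measure.map (fun ω (i : ℕ) => X (b + i) ω) μ := by
  have hY : ∀ c : ℕ, Measurable (fun ω (i : ℕ) => X (c + i) ω) := fun c =>
    measurable_pi_lambda _ fun i => hmeas _
  haveI := Measure.isProbabilityMeasure_map (μ := μ) (hY a).aemeasurable
  haveI := Measure.isProbabilityMeasure_map (μ := μ) (hY b).aemeasurable
  refine ext_of_generate_finite _ generateFrom_measurableCylinders.symm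
    isPiSystem_measurableCylinders (fun s hs => ?_) (by simp)
  obtain ⟨I, S, hSmeas, rfl⟩ := (mem_measurableCylinders s).1 hs
  rw [Measure.map_apply (hY a) (hSmeas.cylinder), Measure.map_apply (hY b) (hSmeas.cylinder)]
  have hpre : ∀ c : ℕ, (fun ω (i : ℕ) => X (c + i) ω) ⁻¹' cylinder I S
      = (fun ω (i : I) => X (c + i) ω) ⁻¹' S := by
    intro c
    rfl
  have key : ∀ c : ℕ, μ ((fun ω (i : I) => X (c + i) ω) ⁻¹' S)
      = ∑' v : S, ∏ j ∈ I,
          μ (X 1 ⁻¹' {(fun r => if h : r ∈ I then (v : (i : I) → ℕ) ⟨r, h⟩ else 0) j}) := by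
    intro c
    have hT : Measurable (fun ω (i : I) => X (c + i) ω) :=
      measurable_pi_lambda _ fun i => hmeas _
    have hdec : (fun ω (i : I) => X (c + i) ω) ⁻¹' S
        = ⋃ v ∈ S, (fun ω (i : I) => X (c + i) ω) ⁻¹' {v} := by
      rw [← Set.preimage_iUnion₂]
      simp
    rw [hdec, measure_biUnion S.to_countable
      (fun v hv w hw hne => Set.disjoint_iff_inter_eq_empty.mpr (by
        rw [← Set.preimage_inter, Set.singleton_inter_eq_empty.mpr (by simpa using hne),
          Set.preimage_empty]))
      (fun v hv => hT (measurableSet_singleton v))]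
    refine tsum_congr fun v => ?_
    have hsingle : (fun ω (i : I) => X (c + i) ω) ⁻¹' {(v : (i : I) → ℕ)}
        = ⋂ j ∈ I, X (c + j) ⁻¹'
            {(fun r => if h : r ∈ I then (v : (i : I) → ℕ) ⟨r, h⟩ else 0) j} := by
      ext ω
      simp only [Set.mem_preimage, Set.mem_singleton_iff, funext_iff, Set.mem_iInter]
      constructor
      · intro h j hj
        simp only [Set.mem_preimage, Set.mem_singleton_iff, dif_pos hj]
        exact h ⟨j, hj⟩
      · intro h j
        have := h j j.2
        simpa [dif_pos j.2] using this
    rw [hsingle, prodA μ X hindep hident c I _]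
  rw [hpre a, hpre b, key a, key b]

lemma keyEquiv (k : ℕ) (hk : 1 ≤ k) (u : ℕ → ℕ) (hu : ∀ i, 0 < u i) :
    (∃ N : ℕ, ∀ t : ℕ, N ≤ t → ∃ g : Fin k → ℕ,
        ∑ j, ∑ i ∈ Finset.range (g j + 1), u i = t)
    ↔ (∃ N : ℕ, ∀ t : ℕ, N ≤ t → ∃ l : ℕ, 1 ≤ l ∧ l ≤ k ∧ ∃ g : Fin l → ℕ,
        ∑ j, ∑ i ∈ Finset.range (g j + 1), u (i + 1) = t) := by
  set W' : ℕ → ℕ := fun h => ∑ i ∈ Finset.range h, u (i + 1) with hW'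
  have hWsplit : ∀ h : ℕ, ∑ i ∈ Finset.range (h + 1), u i = u 0 + W' h := by
    intro h
    rw [Finset.sum_range_succ' u h, add_comm]
  constructor
  · rintro ⟨N, hN⟩
    refine ⟨N + 1, fun t ht => ?_⟩
    obtain ⟨g, hg⟩ := hN (t + k * u 0) (by omega)
    have hg2 : ∑ j : Fin k, W' (g j) = t := by
      have : ∑ j : Fin k, (u 0 + W' (g j)) = t + k * u 0 := by
        rw [← hg]; exact Finset.sum_congr rfl fun j _ => (hWsplit (g j)).symm
      rw [Finset.sum_add_distrib, Finset.sum_const, Finset.card_univ, Fintype.card_fin,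
        smul_eq_mul, mul_comm] at this
      omega
    set G : ℕ → ℕ := fun j => if h : j < k then g ⟨j, h⟩ else 0 with hG
    have hGsum : ∑ j ∈ Finset.range k, W' (G j) = t := by
      rw [← Fin.sum_univ_eq_sum_range (fun j => W' (G j)) k, ← hg2]
      exact Finset.sum_congr rfl fun j _ => by simp [hG, j.isLt]
    set s : Finset ℕ := (Finset.range k).filter (fun j => G j ≠ 0) with hs
    have hfil : ∑ j ∈ s, W' (G j) = t := by
      rw [hs, Finset.sum_filter_of_ne]
      · exact hGsum
      · intro x hx hne
        intro h0
        apply hne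
        rw [h0]
        simp [hW']
    have hlk : s.card ≤ k := by
      calc s.card ≤ (Finset.range k).card := Finset.card_filter_le _ _
      _ = k := Finset.card_range k
    have hl1 : 1 ≤ s.card := by
      rcases Nat.eq_zero_or_pos s.card with h0 | h
      · exfalso
        rw [Finset.card_eq_zero] at h0
        rw [h0] at hfil
        simp at hfil
        omega
      · exact h
    refine ⟨s.card, hl1, hlk, ?_⟩
    set e := s.orderIsoOfFin rfl with he
    refine ⟨fun j => G (e j) - 1, ?_⟩
    have hmem : ∀ j : Fin s.card, G ((e j : ℕ)) ≠ 0 := fun j =>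
      (Finset.mem_filter.mp (e j).2).2
    have : ∀ j : Fin s.card, ∑ i ∈ Finset.range ((G (e j : ℕ) - 1) + 1), u (i + 1)
        = W' (G (e j : ℕ)) := by
      intro j
      rw [Nat.sub_add_cancel (Nat.one_le_iff_ne_zero.mpr (hmem j))]
    calc ∑ j : Fin s.card, ∑ i ∈ Finset.range ((G (e j : ℕ) - 1) + 1), u (i + 1)
        = ∑ j : Fin s.card, W' (G (e j : ℕ)) := Finset.sum_congr rfl fun j _ => this j
      _ = ∑ x : s, W' (G (x : ℕ)) := Equiv.sum_comp e.toEquiv (fun x => W' (G (x : ℕ)))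
      _ = ∑ x ∈ s, W' (G x) := Finset.sum_coe_sort s (fun x => W' (G x))
      _ = t := hfil
  · rintro ⟨N, hN⟩
    refine ⟨N + k * u 0, fun t ht => ?_⟩
    obtain ⟨l, hl1, hlk, f, hf⟩ := hN (t - k * u 0) (by omega)
    set F : ℕ → ℕ := fun j => if h : j < l then f ⟨j, h⟩ + 1 else 0 with hF
    refine ⟨fun j => F j, ?_⟩
    have h1 : ∑ j : Fin k, ∑ i ∈ Finset.range (F (j : ℕ) + 1), u i
        = k * u 0 + ∑ j ∈ Finset.range k, W' (F j) := by
      rw [Fin.sum_univ_eq_sum_range (fun j => ∑ i ∈ Finset.range (F j + 1), u i) k]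
      rw [Finset.sum_congr rfl fun j _ => hWsplit (F j)]
      rw [Finset.sum_add_distrib, Finset.sum_const, Finset.card_range, smul_eq_mul]
    have h2 : ∑ j ∈ Finset.range k, W' (F j) = t - k * u 0 := by
      have hsplit : ∑ j ∈ Finset.range l, W' (F j) + ∑ j ∈ Finset.Ico l k, W' (F j)
          = ∑ j ∈ Finset.range k, W' (F j) := by
        rw [Finset.range_eq_Ico, Finset.range_eq_Ico]
        exact Finset.sum_Ico_consecutive (fun j => W' (F j)) (Nat.zero_le l) hlk
      have hzero : ∑ j ∈ Finset.Ico l k, W' (F j) = 0 := by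
        apply Finset.sum_eq_zero
        intro j hj
        have : ¬ j < l := by
          have := (Finset.mem_Ico.mp hj).1
          omega
        simp [hF, this, hW']
      have hfirst : ∑ j ∈ Finset.range l, W' (F j) = t - k * u 0 := by
        rw [← Fin.sum_univ_eq_sum_range (fun j => W' (F j)) l, ← hf]
        refine Finset.sum_congr rfl fun j _ => ?_
        simp [hF, j.isLt, hW']
      omega
    rw [h1, h2]
    omega

lemma Icc_sum_eq (h : ℕ → ℕ) (m F : ℕ) (hmF : m ≤ F) :
    ∑ i ∈ Finset.Icc m F, h i = ∑ i ∈ Finset.range (F - m + 1), h (m + i) := by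
  rw [← Finset.Ico_add_one_right_eq_Icc, Finset.sum_Ico_eq_sum_range,
    show F + 1 - m = F - m + 1 from by omega]

lemma reindexA (X : ℕ → ℕ) (k m t : ℕ) :
    (∃ f : Fin k → ℕ, (∀ j, m ≤ f j) ∧ ∑ j, ∑ i ∈ Finset.Icc m (f j), X i = t)
    ↔ ∃ g : Fin k → ℕ, ∑ j, ∑ i ∈ Finset.range (g j + 1), X (m + i) = t := by
  constructor
  · rintro ⟨f, hfm, hsum⟩
    refine ⟨fun j => f j - m, ?_⟩
    rw [← hsum]
    exact (Finset.sum_congr rfl fun j _ => (Icc_sum_eq X m (f j) (hfm j))).symm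
  · rintro ⟨g, hsum⟩
    refine ⟨fun j => m + g j, fun j => Nat.le_add_right m (g j), ?_⟩
    rw [← hsum]
    refine Finset.sum_congr rfl fun j _ => ?_
    rw [Icc_sum_eq X m (m + g j) (Nat.le_add_right _ _), Nat.add_sub_cancel_left]

lemma measurable_SB (k : ℕ) : MeasurableSet {u : ℕ → ℕ | ∃ N : ℕ, ∀ t : ℕ, N ≤ t →
    ∃ l : ℕ, 1 ≤ l ∧ l ≤ k ∧ ∃ g : Fin l → ℕ,
      ∑ j, ∑ i ∈ Finset.range (g j + 1), u i = t} := by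
  have hsum : ∀ (l : ℕ) (g : Fin l → ℕ),
      Measurable fun u : ℕ → ℕ => ∑ j, ∑ i ∈ Finset.range (g j + 1), u i := by
    intro l g
    apply Finset.measurable_sum
    intro j _
    apply Finset.measurable_sum
    intro i _
    exact measurable_pi_apply i
  have heq : {u : ℕ → ℕ | ∃ N : ℕ, ∀ t : ℕ, N ≤ t →
      ∃ l : ℕ, 1 ≤ l ∧ l ≤ k ∧ ∃ g : Fin l → ℕ,
        ∑ j, ∑ i ∈ Finset.range (g j + 1), u i = t}
      = ⋃ N : ℕ, ⋂ t : ℕ, ⋂ _ : N ≤ t, ⋃ l : ℕ, ⋃ _ : 1 ≤ l, ⋃ _ : l ≤ k,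
          ⋃ g : Fin l → ℕ, {u : ℕ → ℕ | ∑ j, ∑ i ∈ Finset.range (g j + 1), u i = t} := by
    ext u
    simp only [Set.mem_setOf_eq, Set.mem_iUnion, Set.mem_iInter, exists_prop]
  rw [heq]
  refine MeasurableSet.iUnion fun N => ?_
  refine MeasurableSet.iInter fun t => ?_
  refine MeasurableSet.iInter fun _ => ?_
  refine MeasurableSet.iUnion fun l => ?_
  refine MeasurableSet.iUnion fun _ => ?_
  refine MeasurableSet.iUnion fun _ => ?_
  refine MeasurableSet.iUnion fun g => ?_
  exact (hsum l g) (measurableSet_singleton t)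

/-- Lemma 3.3 of the paper: for i.i.d. positive integer gaps, the probability
that the weight sequence generated by `{X i}_{i≥m}` is weakly asymptotically
`k`-complete equals the probability that the weight sequence generated by
`{X i}_{i≥n}` is weakly asymptotically `≤ k`-complete, for all `n, m ≥ 1`. -/
theorem stmt14
    {Ω : Type*} [MeasurableSpace Ω] (μ : Measure Ω) [IsProbabilityMeasure μ]
    (k : ℕ) (hk : 1 ≤ k)
    (X : ℕ → Ω → ℕ)
    (hmeas : ∀ i, Measurable (X i))
    (hpos : ∀ i ω, 0 < X i ω)
    (hindep : iIndepFun X μ)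
    (hident : ∀ i, IdentDistrib (X i) (X 1) μ μ)
    (n m : ℕ) (hn : 1 ≤ n) (hm : 1 ≤ m) :
    μ {ω | ∃ N : ℕ, ∀ t : ℕ, N ≤ t →
        ∃ f : Fin k → ℕ, (∀ j, m ≤ f j) ∧
          ∑ j, (∑ i ∈ Finset.Icc m (f j), X i ω) = t}
      = μ {ω | ∃ N : ℕ, ∀ t : ℕ, N ≤ t →
        ∃ l : ℕ, 1 ≤ l ∧ l ≤ k ∧
          ∃ f : Fin l → ℕ, (∀ j, n ≤ f j) ∧
            ∑ j, (∑ i ∈ Finset.Icc n (f j), X i ω) = t} := by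
  classical
  set SB : Set (ℕ → ℕ) := {u | ∃ N : ℕ, ∀ t : ℕ, N ≤ t →
      ∃ l : ℕ, 1 ≤ l ∧ l ≤ k ∧ ∃ g : Fin l → ℕ,
        ∑ j, ∑ i ∈ Finset.range (g j + 1), u i = t} with hSB
  have hSBmeas : MeasurableSet SB := measurable_SB k
  have hY : ∀ c : ℕ, Measurable (fun ω (i : ℕ) => X (c + i) ω) := fun c =>
    measurable_pi_lambda _ fun i => hmeas _
  have hL : {ω | ∃ N : ℕ, ∀ t : ℕ, N ≤ t →
        ∃ f : Fin k → ℕ, (∀ j, m ≤ f j) ∧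
          ∑ j, (∑ i ∈ Finset.Icc m (f j), X i ω) = t}
      = (fun ω (i : ℕ) => X (m + 1 + i) ω) ⁻¹' SB := by
    ext ω
    simp only [Set.mem_setOf_eq, Set.mem_preimage, hSB]
    have harg : ∀ i : ℕ, m + 1 + i = m + (i + 1) := fun i => by omega
    simp only [harg]
    exact (exists_congr fun N => forall_congr' fun t => imp_congr_right fun _ =>
      reindexA (fun i => X i ω) k m t).trans
      (keyEquiv k hk (fun i => X (m + i) ω) (fun i => hpos _ ω))
  have hR : {ω | ∃ N : ℕ, ∀ t : ℕ, N ≤ t →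
        ∃ l : ℕ, 1 ≤ l ∧ l ≤ k ∧
          ∃ f : Fin l → ℕ, (∀ j, n ≤ f j) ∧
            ∑ j, (∑ i ∈ Finset.Icc n (f j), X i ω) = t}
      = (fun ω (i : ℕ) => X (n + i) ω) ⁻¹' SB := by
    ext ω
    simp only [Set.mem_setOf_eq, Set.mem_preimage, hSB]
    exact exists_congr fun N => forall_congr' fun t => imp_congr_right fun _ =>
      exists_congr fun l => and_congr_right fun _ => and_congr_right fun _ =>
        reindexA (fun i => X i ω) l n t
  rw [hL, hR, ← Measure.map_apply (hY (m + 1)) hSBmeas, ← Measure.map_apply (hY n) hSBmeas,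
    map_shift_eq μ X hmeas hindep hident (m + 1) n]
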